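/- In the setting of the cone lemma (Γ = 0 * Δ, embeddings p and p' as above), the linear map λ(x_0,x_1,…,x_n) ↦ λ_0(a_1 x_1,…,a_n x_n) from Stress_k(Γ,p) to Stress_k(Δ,p') is a linear isomorphism. In particular, every affine k-stress ω' on (Δ,p') lifts to an affine k-stress ω on (Γ,p) with ω'_F = (Π_{i∈F} a_i) ω_F for every (k−1)-dimensional face F of Δ. -/

import Mathlib

open scoped Classical

noncomputable section

/-- The differential operator `∂_ℓ` associated to a linear form with coefficients `l`. -/
def Dop {W : Type} [Fintype W] (l : W → ℝ) (q : MvPolynomial W ℝ) : MvPolynomial W ℝ :=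
  ∑ w : W, l w • MvPolynomial.pderiv w q

/-- An affine `k`-stress on a simplicial complex with face set `faces` and embedding `q`
into `ℝ^D`: a homogeneous degree-`k` polynomial supported on faces and annihilated by the
`D` coordinate differential operators and the all-ones operator. -/
def IsStressOn {W : Type} [Fintype W] {D : ℕ} (faces : Set (Finset W))
    (q : W → Fin D → ℝ) (k : ℕ) (lam : MvPolynomial W ℝ) : Prop :=
  lam.IsHomogeneous k ∧
  (∀ m ∈ lam.support, m.support ∈ faces) ∧
  (∀ i : Fin D, Dop (fun w => q w i) lam = 0) ∧
  Dop (fun _ => (1 : ℝ)) lam = 0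

/-- The cone `0 * Δ` over a complex `Δ` on `[n]`, with apex `none`. -/
def coneComplex {n : ℕ} (Δ : Set (Finset (Fin n))) : Set (Finset (Option (Fin n))) :=
  {F | F.eraseNone ∈ Δ}

/-- Substituting `x₀ ↦ 0` and `x_i ↦ a_i x_i`; on `λ = ∑_j x₀^j λ_j` this produces
`λ₀(a_1 x_1, …, a_n x_n)`. -/
def coneSubst {n : ℕ} (a : Fin n → ℝ) :
    MvPolynomial (Option (Fin n)) ℝ →ₐ[ℝ] MvPolynomial (Fin n) ℝ :=
  MvPolynomial.aeval (fun w : Option (Fin n) =>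
    w.elim 0 (fun i => MvPolynomial.C (a i) * MvPolynomial.X i))

/-- The exponent vector of the squarefree monomial `∏_{v ∈ G} x_v`. -/
def sqFree {W : Type} (G : Finset W) : W →₀ ℕ :=
  ∑ v ∈ G, Finsupp.single v 1

/-! ### Auxiliary lemmas -/

namespace ConeAux

open MvPolynomial

lemma Dop_C {W : Type} [Fintype W] (l : W → ℝ) (r : ℝ) : Dop l (C r) = 0 := by simp [Dop]

lemma Dop_X {W : Type} [Fintype W] (l : W → ℝ) (w : W) : Dop l (X w) = C (l w) := by
  classical simp [Dop, pderiv_X, Pi.single_apply, smul_ite, Finset.sum_ite_eq', smul_eq_C_mul]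

lemma Dop_add {W : Type} [Fintype W] (l : W → ℝ) (f g : MvPolynomial W ℝ) :
    Dop l (f + g) = Dop l f + Dop l g := by
  simp [Dop, Finset.sum_add_distrib, smul_add]

lemma Dop_mul {W : Type} [Fintype W] (l : W → ℝ) (f g : MvPolynomial W ℝ) :
    Dop l (f * g) = Dop l f * g + f * Dop l g := by
  simp only [Dop, pderiv_mul, smul_add, Finset.sum_add_distrib, Finset.sum_mul, Finset.mul_sum,
    smul_mul_assoc, mul_smul_comm]

lemma Dop_zero_fun {W : Type} [Fintype W] (f : MvPolynomial W ℝ) :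
    Dop (fun _ => (0:ℝ)) f = 0 := by simp [Dop]

lemma Dop_congr {W : Type} [Fintype W] {l l' : W → ℝ} (h : ∀ w, l w = l' w)
    (f : MvPolynomial W ℝ) : Dop l f = Dop l' f := by
  unfold Dop; exact Finset.sum_congr rfl fun w _ => by rw [h w]

/-- Chain rule for `Dop` through a substitution whose images have constant `Dop`. -/
lemma Dop_aeval {V W : Type} [Fintype V] [Fintype W] (g : V → MvPolynomial W ℝ) (l : W → ℝ)
    (c : V → ℝ) (h : ∀ v, Dop l (g v) = C (c v)) (f : MvPolynomial V ℝ) :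
    Dop l (aeval g f) = aeval g (Dop c f) := by
  induction f using MvPolynomial.induction_on with
  | C r => simp [Dop_C, algebraMap_eq]
  | add f1 f2 h1 h2 => rw [map_add, Dop_add, h1, h2, Dop_add, map_add]
  | mul_X f v hf =>
    rw [map_mul, aeval_X, Dop_mul, hf, h v, Dop_mul, Dop_X, map_add, map_mul, map_mul, aeval_X,
      aeval_C]
    simp [algebraMap_eq]

lemma algMap_poly {W : Type} (r : ℝ) :
    (algebraMap ℝ (Polynomial (MvPolynomial W ℝ))) r = Polynomial.C (C r) := rfl

lemma derivative_transl {W : Type} [Fintype W] (c : W → ℝ) (f : MvPolynomial W ℝ) :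
    Polynomial.derivative
      (aeval (fun w => Polynomial.C (X w) + Polynomial.C (C (c w)) * Polynomial.X) f) =
    aeval (fun w => Polynomial.C (X w) + Polynomial.C (C (c w)) * Polynomial.X) (Dop c f) := by
  induction f using MvPolynomial.induction_on with
  | C r => rw [Dop_C, map_zero, aeval_C]; simp [algMap_poly]
  | add f1 f2 h1 h2 => rw [map_add, map_add, h1, h2, Dop_add, map_add]
  | mul_X f v hf =>
    rw [map_mul, aeval_X, Polynomial.derivative_mul, hf, Dop_mul, Dop_X]
    simp only [Polynomial.derivative_add, Polynomial.derivative_mul, Polynomial.derivative_C,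
      Polynomial.derivative_X, map_add, map_mul, aeval_X, aeval_C, algMap_poly]
    ring

lemma eval_transl {W : Type} [Fintype W] (c : W → ℝ) (g : MvPolynomial W ℝ)
    (f : MvPolynomial W ℝ) :
    Polynomial.eval g
      (aeval (fun w => Polynomial.C (X w) + Polynomial.C (C (c w)) * Polynomial.X) f) =
    aeval (fun w => X w + C (c w) * g) f := by
  induction f using MvPolynomial.induction_on with
  | C r => rw [aeval_C, aeval_C, algMap_poly, Polynomial.eval_C, algebraMap_eq]
  | add f1 f2 h1 h2 => rw [map_add, Polynomial.eval_add, h1, h2, map_add]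
  | mul_X f v hf =>
    rw [map_mul, aeval_X, Polynomial.eval_mul, hf, map_mul, aeval_X]
    simp

/-- A polynomial annihilated by `Dop c` is invariant under the translation
`x_w ↦ x_w + c_w · g`. -/
lemma transl_eq_self {W : Type} [Fintype W] (c : W → ℝ) (g : MvPolynomial W ℝ)
    (f : MvPolynomial W ℝ) (hf : Dop c f = 0) :
    aeval (fun w => X w + C (c w) * g) f = f := by
  have h0 : Polynomial.derivative
      (aeval (fun w => Polynomial.C (X w) + Polynomial.C (C (c w)) * Polynomial.X) f) = 0 := by
    rw [derivative_transl, hf, map_zero]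
  have hC := Polynomial.eq_C_of_derivative_eq_zero h0
  have e1 := eval_transl c g f
  have e0 : (Polynomial.eval 0
      (aeval (fun w => Polynomial.C (X w) + Polynomial.C (C (c w)) * Polynomial.X) f)) = f := by
    rw [eval_transl]; simp
  rw [hC] at e1 e0
  simp only [Polynomial.eval_C] at e1 e0
  rw [← e1, e0]

/-- Monomial supports of a substituted polynomial come from variables of substituted images. -/
lemma support_aeval {V W : Type} (g : V → MvPolynomial W ℝ) (f : MvPolynomial V ℝ)
    (mo : W →₀ ℕ) (hm : mo ∈ (aeval g f).support) :
    ∃ d ∈ f.support, ∀ x ∈ mo.support, ∃ w ∈ d.support, x ∈ (g w).vars := by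
  classical
  have hrw : aeval g f = ∑ d ∈ f.support, aeval g (monomial d (coeff d f)) := by
    conv_lhs => rw [f.as_sum]
    rw [map_sum]
  rw [hrw] at hm
  have := MvPolynomial.support_sum hm
  rw [Finset.mem_biUnion] at this
  obtain ⟨d, hd, hmd⟩ := this
  refine ⟨d, hd, fun x hx => ?_⟩
  have hxv : x ∈ (aeval g (monomial d (coeff d f))).vars :=
    (mem_vars x).2 ⟨mo, hmd, hx⟩
  rw [aeval_monomial] at hxv
  have h2 := vars_mul _ _ hxv
  rw [Finset.mem_union] at h2
  rcases h2 with h2 | h2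
  · exfalso
    have : (algebraMap ℝ (MvPolynomial W ℝ)) (coeff d f) = C (coeff d f) := rfl
    rw [this, vars_C] at h2
    exact Finset.notMem_empty _ h2
  · have h3 : (d.prod fun w e => g w ^ e).vars ⊆ d.support.biUnion fun w => (g w).vars := by
      refine (vars_prod _).trans ?_
      exact Finset.biUnion_mono fun w _ => vars_pow _ _
    have := h3 h2
    rw [Finset.mem_biUnion] at this
    exact this

/-! ### sqFree lemmas -/

lemma sqFree_apply {W : Type} [DecidableEq W] (G : Finset W) (v : W) :
    sqFree G v = if v ∈ G then 1 else 0 := by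
  classical
  rw [sqFree, Finset.sum_apply']
  simp [Finsupp.single_apply]

lemma support_sqFree {W : Type} [DecidableEq W] (G : Finset W) : (sqFree G).support = G := by
  ext v
  rw [Finsupp.mem_support_iff, sqFree_apply]
  split <;> simp_all

lemma sqFree_image_none {n : ℕ} (F : Finset (Fin n)) : sqFree (F.image some) none = 0 := by
  rw [sqFree_apply]
  simp

lemma some_sqFree_image {n : ℕ} (F : Finset (Fin n)) :
    (sqFree (F.image some)).some = sqFree F := by
  ext i
  rw [Finsupp.some_apply, sqFree_apply, sqFree_apply]
  simp

lemma eq_sqFree_image {n : ℕ} (F : Finset (Fin n)) (d : Option (Fin n) →₀ ℕ)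
    (h0 : d none = 0) (hs : d.some = sqFree F) : d = sqFree (F.image some) := by
  ext w
  cases w with
  | none => rw [h0, sqFree_image_none]
  | some i =>
    have := DFunLike.congr_fun hs i
    rw [Finsupp.some_apply] at this
    rw [this, sqFree_apply, sqFree_apply]
    simp

lemma prod_sqFree {n : ℕ} (F : Finset (Fin n)) (a : Fin n → ℝ) :
    ((sqFree F).prod fun i e => a i ^ e) = ∏ i ∈ F, a i := by
  classical
  rw [Finsupp.prod, support_sqFree]
  refine Finset.prod_congr rfl fun i hi => ?_
  rw [sqFree_apply, if_pos hi, pow_one]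

/-! ### coneSubst on monomials -/

lemma coneSubst_monomial {n : ℕ} (a : Fin n → ℝ) (d : Option (Fin n) →₀ ℕ) (r : ℝ) :
    coneSubst a (monomial d r) =
      if d none = 0 then monomial d.some (r * d.some.prod fun i e => a i ^ e) else 0 := by
  classical
  rw [coneSubst, aeval_monomial]
  rw [Finsupp.prod_option_index _ _ (fun o => pow_zero _) (fun o m₁ m₂ => pow_add _ _ _)]
  simp only [Option.elim]
  split_ifs with hd
  · rw [hd, pow_zero, one_mul]
    have halg : (algebraMap ℝ (MvPolynomial (Fin n) ℝ)) r = C r := rfl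
    rw [halg, monomial_eq]
    have h1 : (d.some.prod fun i e => (C (a i) * X i) ^ e) =
        C (d.some.prod fun i e => a i ^ e) *
          d.some.prod fun i e => (X i : MvPolynomial (Fin n) ℝ) ^ e := by
      simp only [Finsupp.prod]
      rw [map_prod, ← Finset.prod_mul_distrib]
      exact Finset.prod_congr rfl fun i _ => by rw [mul_pow, map_pow]
    rw [h1, map_mul, mul_assoc]
  · rw [zero_pow hd, zero_mul, mul_zero]

lemma coeff_coneSubst {n : ℕ} (a : Fin n → ℝ) (lam : MvPolynomial (Option (Fin n)) ℝ)
    (F : Finset (Fin n)) :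
    (coneSubst a lam).coeff (sqFree F) =
      (∏ i ∈ F, a i) * lam.coeff (sqFree (F.image some)) := by
  classical
  induction lam using MvPolynomial.induction_on' with
  | add p q hp hq => rw [map_add, coeff_add, coeff_add, hp, hq, mul_add]
  | monomial d r =>
    rw [coneSubst_monomial]
    by_cases hd : d none = 0
    · rw [if_pos hd, coeff_monomial, coeff_monomial]
      by_cases h : d = sqFree (F.image some)
      · subst h
        rw [if_pos rfl, if_pos (some_sqFree_image F), some_sqFree_image, prod_sqFree]
        ring
      · rw [if_neg h, if_neg fun hs => h (eq_sqFree_image F d hd hs), mul_zero]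
    · rw [if_neg hd, coeff_zero, coeff_monomial, if_neg, mul_zero]
      intro h
      rw [h, sqFree_image_none] at hd
      exact hd rfl

lemma Dop_sub {W : Type} [Fintype W] (l : W → ℝ) (f g : MvPolynomial W ℝ) :
    Dop l (f - g) = Dop l f - Dop l g := by
  simp [Dop, smul_sub, Finset.sum_sub_distrib]

lemma Dop_C_mul {W : Type} [Fintype W] (l : W → ℝ) (r : ℝ) (f : MvPolynomial W ℝ) :
    Dop l (C r * f) = C r * Dop l f := by
  rw [Dop_mul, Dop_C, zero_mul, zero_add]

/-- The lift map `w ↦ w((x_{some i} - x_none)/a_i)`. -/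
def liftL {n : ℕ} (a : Fin n → ℝ) :
    MvPolynomial (Fin n) ℝ →ₐ[ℝ] MvPolynomial (Option (Fin n)) ℝ :=
  aeval fun i => C (a i)⁻¹ * (X (some i) - X none)

lemma coneSubst_liftL_apply {n : ℕ} (a : Fin n → ℝ) (ha : ∀ i, a i ≠ 0)
    (w : MvPolynomial (Fin n) ℝ) : coneSubst a (liftL a w) = w := by
  have hcomp : (coneSubst a).comp (liftL a) = AlgHom.id ℝ (MvPolynomial (Fin n) ℝ) := by
    apply MvPolynomial.algHom_ext
    intro i
    simp only [AlgHom.comp_apply, AlgHom.id_apply, liftL, aeval_X, coneSubst, map_mul, map_sub,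
      aeval_C]
    simp only [Option.elim]
    rw [mul_sub]
    have h1 : (algebraMap ℝ (MvPolynomial (Fin n) ℝ)) (a i)⁻¹ = C (a i)⁻¹ := rfl
    rw [h1, mul_zero, sub_zero, ← mul_assoc, ← map_mul, inv_mul_cancel₀ (ha i), C_1, one_mul]
  have := DFunLike.congr_fun hcomp w
  simpa using this

lemma liftL_coneSubst_apply {n : ℕ} (a : Fin n → ℝ) (ha : ∀ i, a i ≠ 0)
    (lam : MvPolynomial (Option (Fin n)) ℝ) (hlam : Dop (fun _ => (1:ℝ)) lam = 0) :
    liftL a (coneSubst a lam) = lam := by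
  have hcomp : (liftL a).comp (coneSubst a) =
      aeval (fun w : Option (Fin n) =>
        X w + C ((fun _ : Option (Fin n) => (1:ℝ)) w) * (- X none)) := by
    apply MvPolynomial.algHom_ext
    intro w
    cases w with
    | none =>
      simp only [AlgHom.comp_apply, coneSubst, aeval_X, Option.elim, map_zero, C_1, one_mul]
      rw [add_neg_cancel]
    | some i =>
      simp only [AlgHom.comp_apply, coneSubst, aeval_X, Option.elim, map_mul, liftL, aeval_C,
        C_1, one_mul]
      have h1 : (algebraMap ℝ (MvPolynomial (Option (Fin n)) ℝ)) (a i) = C (a i) := rfl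
      rw [h1, ← mul_assoc, ← map_mul, mul_inv_cancel₀ (ha i), C_1, one_mul]
      ring
  have := DFunLike.congr_fun hcomp lam
  simp only [AlgHom.comp_apply] at this
  rw [this, transl_eq_self _ _ _ hlam]

lemma coneSubst_homog {n : ℕ} (a : Fin n → ℝ) {k : ℕ} {lam : MvPolynomial (Option (Fin n)) ℝ}
    (h : lam.IsHomogeneous k) : (coneSubst a lam).IsHomogeneous k := by
  have hg : ∀ w : Option (Fin n),
      ((w.elim 0 fun i => C (a i) * X i : MvPolynomial (Fin n) ℝ)).IsHomogeneous 1 := by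
    intro w
    cases w with
    | none => exact isHomogeneous_zero _ _ _
    | some i => exact isHomogeneous_C_mul_X _ _
  have := h.aeval _ hg
  rwa [one_mul] at this

lemma liftL_homog {n : ℕ} (a : Fin n → ℝ) {k : ℕ} {w : MvPolynomial (Fin n) ℝ}
    (h : w.IsHomogeneous k) : (liftL a w).IsHomogeneous k := by
  have hg : ∀ i : Fin n,
      ((C (a i)⁻¹ * (X (some i) - X none) : MvPolynomial (Option (Fin n)) ℝ)).IsHomogeneous 1 :=
    fun i => ((isHomogeneous_X _ _).sub (isHomogeneous_X _ _)).C_mul _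
  have := h.aeval _ hg
  rwa [one_mul] at this

lemma Dop_coneSubst {n : ℕ} (a : Fin n → ℝ) (l : Fin n → ℝ)
    (lam : MvPolynomial (Option (Fin n)) ℝ) :
    Dop l (coneSubst a lam) =
      coneSubst a (Dop (fun w : Option (Fin n) => w.elim 0 fun i => a i * l i) lam) := by
  apply Dop_aeval
  intro v
  cases v with
  | none => simp [Dop]
  | some i =>
    rw [Option.elim, Dop_C_mul, Dop_X, ← map_mul]
    rfl

lemma Dop_liftL {n : ℕ} (a : Fin n → ℝ) (l : Option (Fin n) → ℝ)
    (w : MvPolynomial (Fin n) ℝ) :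
    Dop l (liftL a w) =
      liftL a (Dop (fun i => (a i)⁻¹ * (l (some i) - l none)) w) := by
  apply Dop_aeval
  intro i
  rw [Dop_C_mul, Dop_sub, Dop_X, Dop_X, ← C_sub, ← map_mul]

lemma vars_coneSubst_img {n : ℕ} (a : Fin n → ℝ) (w : Option (Fin n)) (x : Fin n)
    (hx : x ∈ ((w.elim 0 fun i => C (a i) * X i : MvPolynomial (Fin n) ℝ)).vars) :
    w = some x := by
  cases w with
  | none => simp [vars_0] at hx
  | some i =>
    have h2 := vars_mul _ _ hx
    rw [Finset.mem_union, vars_C] at h2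
    rcases h2 with h2 | h2
    · exact absurd h2 (Finset.notMem_empty _)
    · have h3 : x ∈ ({i} : Finset (Fin n)) := vars_X (R := ℝ) ▸ h2
      rw [Finset.mem_singleton] at h3
      rw [h3]

lemma forward {n m k : ℕ} (Δ : Set (Finset (Fin n)))
    (hΔ : ∀ F ∈ Δ, ∀ G ⊆ F, G ∈ Δ)
    (p : Option (Fin n) → Fin (m + 1) → ℝ)
    (hp0 : p none = 0)
    (ha : ∀ i : Fin n, p (some i) (Fin.last m) ≠ 0)
    {lam : MvPolynomial (Option (Fin n)) ℝ}
    (hl : IsStressOn (coneComplex Δ) p k lam) :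
    IsStressOn Δ (fun i j => p (some i) j.castSucc / p (some i) (Fin.last m)) k
      (coneSubst (fun i => p (some i) (Fin.last m)) lam) := by
  classical
  set a : Fin n → ℝ := fun i => p (some i) (Fin.last m) with ha_def
  refine ⟨coneSubst_homog a hl.1, ?_, ?_, ?_⟩
  · intro mo hmo
    obtain ⟨d, hd, hmd⟩ := support_aeval _ lam mo hmo
    have hsub : mo.support ⊆ d.support.eraseNone := by
      intro x hx
      obtain ⟨v, hv, hxv⟩ := hmd x hx
      have := vars_coneSubst_img a v x hxv
      subst this
      exact Finset.mem_eraseNone.2 hv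
    exact hΔ _ (hl.2.1 d hd) _ hsub
  · intro j
    rw [Dop_coneSubst, Dop_congr (l' := fun w => p w j.castSucc) ?_ lam, hl.2.2.1 j.castSucc,
      map_zero]
    intro w
    cases w with
    | none => simp [hp0]
    | some i =>
      simp only [Option.elim]
      rw [mul_comm, div_mul_cancel₀ _ (ha i)]
  · rw [Dop_coneSubst, Dop_congr (l' := fun w => p w (Fin.last m)) ?_ lam,
      hl.2.2.1 (Fin.last m), map_zero]
    intro w
    cases w with
    | none => simp [hp0]
    | some i => simp [Option.elim]; rfl

lemma backward {n m k : ℕ} (Δ : Set (Finset (Fin n)))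
    (hΔ : ∀ F ∈ Δ, ∀ G ⊆ F, G ∈ Δ)
    (p : Option (Fin n) → Fin (m + 1) → ℝ)
    (hp0 : p none = 0)
    (ha : ∀ i : Fin n, p (some i) (Fin.last m) ≠ 0)
    {w : MvPolynomial (Fin n) ℝ}
    (hw : IsStressOn Δ (fun i j => p (some i) j.castSucc / p (some i) (Fin.last m)) k w) :
    IsStressOn (coneComplex Δ) p k (liftL (fun i => p (some i) (Fin.last m)) w) := by
  classical
  set a : Fin n → ℝ := fun i => p (some i) (Fin.last m) with ha_def
  refine ⟨liftL_homog a hw.1, ?_, ?_, ?_⟩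
  · intro mo hmo
    obtain ⟨d, hd, hmd⟩ := support_aeval _ w mo hmo
    have hsub : mo.support.eraseNone ⊆ d.support := by
      intro j hj
      have hjm : some j ∈ mo.support := Finset.mem_eraseNone.1 hj
      obtain ⟨i, hi, hv⟩ := hmd _ hjm
      have h2 := vars_mul _ _ hv
      rw [Finset.mem_union, vars_C] at h2
      rcases h2 with h2 | h2
      · exact absurd h2 (Finset.notMem_empty _)
      · have h3 := vars_sub_subset (p := X (some i)) (q := X (none : Option (Fin n))) h2
        rw [Finset.mem_union, vars_X, vars_X, Finset.mem_singleton, Finset.mem_singleton] at h3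
        rcases h3 with h3 | h3
        · rw [Option.some_inj] at h3
          rwa [h3]
        · exact absurd h3 (by simp)
    show mo.support.eraseNone ∈ Δ
    exact hΔ _ (hw.2.1 d hd) _ hsub
  · intro j'
    rw [Dop_liftL]
    cases j' using Fin.lastCases with
    | last =>
      rw [Dop_congr (l' := fun _ => (1:ℝ)) ?_ w, hw.2.2.2, map_zero]
      intro i
      rw [hp0]
      simp only [Pi.zero_apply, sub_zero]
      exact inv_mul_cancel₀ (ha i)
    | cast j =>
      rw [Dop_congr (l' := fun i => p (some i) j.castSucc / a i) ?_ w, hw.2.2.1 j, map_zero]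
      intro i
      rw [hp0]
      simp only [Pi.zero_apply, sub_zero]
      rw [mul_comm, div_eq_mul_inv]
  · rw [Dop_liftL, Dop_congr (l' := fun _ => (0:ℝ)) ?_ w, Dop_zero_fun, map_zero]
    intro i
    simp

end ConeAux

/-- Cone Lemma, second part: in the setting of the cone lemma, the linear
map `λ ↦ λ₀(a_1 x_1, …, a_n x_n)` is a bijection from `Stress_k(Γ, p)` onto
`Stress_k(Δ, p')`; in particular every `k`-stress `ω'` on `(Δ, p')` lifts to a `k`-stress
`ω` on `(Γ, p)` with `ω'_F = (∏_{i ∈ F} a_i) ω_F` for every `(k−1)`-dimensional face `F`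
of `Δ`. -/
theorem stmt11 {n m k : ℕ} (Δ : Set (Finset (Fin n)))
    (hΔ : ∀ F ∈ Δ, ∀ G ⊆ F, G ∈ Δ)
    (p : Option (Fin n) → Fin (m + 1) → ℝ)
    (hp0 : p none = 0)
    (ha : ∀ i : Fin n, p (some i) (Fin.last m) ≠ 0) :
    Set.BijOn (coneSubst (fun i => p (some i) (Fin.last m)))
      {lam : MvPolynomial (Option (Fin n)) ℝ | IsStressOn (coneComplex Δ) p k lam}
      {w : MvPolynomial (Fin n) ℝ |
        IsStressOn Δ (fun i j => p (some i) j.castSucc / p (some i) (Fin.last m)) k w} ∧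
    ∀ w : MvPolynomial (Fin n) ℝ,
      IsStressOn Δ (fun i j => p (some i) j.castSucc / p (some i) (Fin.last m)) k w →
      ∃ ω : MvPolynomial (Option (Fin n)) ℝ,
        IsStressOn (coneComplex Δ) p k ω ∧
        coneSubst (fun i => p (some i) (Fin.last m)) ω = w ∧
        ∀ F : Finset (Fin n), F ∈ Δ → F.card = k →
          w.coeff (sqFree F) =
            (∏ i ∈ F, p (some i) (Fin.last m)) * ω.coeff (sqFree (F.image some)) := by
  classical
  set a : Fin n → ℝ := fun i => p (some i) (Fin.last m) with ha_def
  constructor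
  · refine ⟨?_, ?_, ?_⟩
    · intro lam hl
      exact ConeAux.forward Δ hΔ p hp0 ha hl
    · intro l1 h1 l2 h2 heq
      have e1 := ConeAux.liftL_coneSubst_apply a ha l1 h1.2.2.2
      have e2 := ConeAux.liftL_coneSubst_apply a ha l2 h2.2.2.2
      rw [← e1, heq, e2]
    · intro w hw
      exact ⟨ConeAux.liftL a w, ConeAux.backward Δ hΔ p hp0 ha hw,
        ConeAux.coneSubst_liftL_apply a ha w⟩
  · intro w hw
    refine ⟨ConeAux.liftL a w, ConeAux.backward Δ hΔ p hp0 ha hw,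
      ConeAux.coneSubst_liftL_apply a ha w, ?_⟩
    intro F _ _
    conv_lhs => rw [← ConeAux.coneSubst_liftL_apply a ha w]
    exact ConeAux.coeff_coneSubst a (ConeAux.liftL a w) F

end
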